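/- arXiv:2602.06428 — 4 statements merged into one kernel-verified Lean document; each statement's English description precedes it below -/
import Mathlib

section
/- Let V be a real Banach space and let Λ : V → ℝ be a continuous convex function. Let μ₀ : V → ℝ be a continuous linear functional that is bounded by Λ, i.e. μ₀(f) ≤ Λ(f) for all f ∈ V. Then for every f₀ ∈ V and every ε > 0 there exist a continuous linear functional μ : V → ℝ and an element f ∈ V such that μ is tangent to Λ at f (i.e. μ(g) ≤ Λ(f+g) − Λ(f) for all g ∈ V), ‖μ − μ₀‖ ≤ ε (operator norm), and ‖f − f₀‖ ≤ (1/ε)(Λ(f₀) − μ₀(f₀) + s), where s := sup{μ₀(g) − Λ(g) : g ∈ V} (note s ≤ 0). -/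
open Pointwise

/-- Ekeland's variational principle on a Banach space, for continuous functions. -/
lemma ekeland_principle {V : Type*} [NormedAddCommGroup V] [CompleteSpace V]
    (h : V → ℝ) (hc : Continuous h) (B : ℝ) (hB : ∀ g, B ≤ h g)
    (f₀ : V) (ε : ℝ) (hε : 0 < ε) :
    ∃ f : V, ε * ‖f - f₀‖ ≤ h f₀ - h f ∧ ∀ g, h f ≤ h g + ε * ‖g - f‖ := by
  classical
  set S : V → Set V := fun x => {y | h y + ε * ‖y - x‖ ≤ h x} with hS
  have hSelf : ∀ x, x ∈ S x := by
    intro x; simp [hS]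
  have hTrans : ∀ x y z, y ∈ S x → z ∈ S y → z ∈ S x := by
    intro x y z hy hz
    simp only [hS, Set.mem_setOf_eq] at *
    have h1 : ‖z - x‖ ≤ ‖z - y‖ + ‖y - x‖ := by
      simpa using norm_sub_le_norm_sub_add_norm_sub z y x
    nlinarith [hz, hy]
  have hbddS : ∀ x, BddBelow (h '' S x) := fun x => ⟨B, by rintro _ ⟨y, _, rfl⟩; exact hB y⟩
  have hneS : ∀ x, (h '' S x).Nonempty := fun x => ⟨h x, x, hSelf x, rfl⟩
  set m : V → ℝ := fun x => sInf (h '' S x) with hm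
  have hmle : ∀ x y, y ∈ S x → m x ≤ h y := fun x y hy => csInf_le (hbddS x) ⟨y, hy, rfl⟩
  have hstep : ∀ (x : V) (n : ℕ), ∃ y, y ∈ S x ∧ h y < m x + (1/2)^n := by
    intro x n
    have : m x < m x + (1/2)^n := lt_add_of_pos_right _ (by positivity)
    obtain ⟨_, ⟨y, hy, rfl⟩, hlt⟩ := exists_lt_of_csInf_lt (hneS x) this
    exact ⟨y, hy, hlt⟩
  set u : ℕ → V := fun n => Nat.rec f₀ (fun n x => (hstep x n).choose) n with hu
  have hu0 : u 0 = f₀ := rfl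
  have husucc : ∀ n, u (n+1) ∈ S (u n) ∧ h (u (n+1)) < m (u n) + (1/2)^n := by
    intro n
    exact (hstep (u n) n).choose_spec
  have hchain : ∀ n k, u (n + k) ∈ S (u n) := by
    intro n k
    induction k with
    | zero => exact hSelf _
    | succ k ih => exact hTrans _ _ _ ih (husucc (n + k)).1
  have hchain' : ∀ n k, n ≤ k → u k ∈ S (u n) := by
    intro n k hnk; obtain ⟨j, rfl⟩ := Nat.exists_eq_add_of_le hnk; exact hchain n j
  have hanti : Antitone fun n => h (u n) := by
    apply antitone_nat_of_succ_le
    intro n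
    have := (husucc n).1
    simp only [hS, Set.mem_setOf_eq] at this
    nlinarith [norm_nonneg (u (n+1) - u n)]
  have hbdd2 : BddBelow (Set.range fun n => h (u n)) := ⟨B, by rintro _ ⟨n, rfl⟩; exact hB _⟩
  set L : ℝ := ⨅ n, h (u n) with hL
  have hLlim : Filter.Tendsto (fun n => h (u n)) Filter.atTop (nhds L) :=
    tendsto_atTop_ciInf hanti hbdd2
  have hLle : ∀ n, L ≤ h (u n) := fun n => ciInf_le hbdd2 n
  have key : ∀ n k, n ≤ k → dist (u n) (u k) ≤ (h (u n) - L) / ε := by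
    intro n k hnk
    have := hchain' n k hnk
    simp only [hS, Set.mem_setOf_eq] at this
    rw [dist_eq_norm, norm_sub_rev]
    rw [div_eq_inv_mul, ← mul_le_mul_iff_right₀ hε, ← mul_assoc, mul_inv_cancel₀ hε.ne', one_mul]
    nlinarith [hLle k]
  have hdist : ∀ n k N, N ≤ n → N ≤ k → dist (u n) (u k) ≤ (h (u N) - L) / ε := by
    intro n k N hn hk
    rcases le_total n k with hnk | hkn
    · calc dist (u n) (u k) ≤ (h (u n) - L) / ε := key n k hnk
        _ ≤ (h (u N) - L) / ε := by gcongr; exact hanti hn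
    · calc dist (u n) (u k) = dist (u k) (u n) := dist_comm _ _
        _ ≤ (h (u k) - L) / ε := key k n hkn
        _ ≤ (h (u N) - L) / ε := by gcongr; exact hanti hk
  have hcauchy : CauchySeq u := by
    apply cauchySeq_of_le_tendsto_0 (fun N => (h (u N) - L) / ε) hdist
    have : Filter.Tendsto (fun N => (h (u N) - L) / ε) Filter.atTop (nhds ((L - L) / ε)) :=
      (hLlim.sub tendsto_const_nhds).div_const ε
    simpa using this
  obtain ⟨f, hf⟩ := cauchySeq_tendsto_of_complete hcauchy
  have hfS : ∀ n, h f + ε * ‖f - u n‖ ≤ h (u n) := by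
    intro n
    have h1 : Filter.Tendsto (fun k => h (u k) + ε * ‖u k - u n‖) Filter.atTop
        (nhds (h f + ε * ‖f - u n‖)) :=
      ((hc.tendsto f).comp hf).add (((hf.sub_const (u n)).norm).const_mul ε)
    apply le_of_tendsto h1
    filter_upwards [Filter.eventually_ge_atTop n] with k hk
    exact hchain' n k hk
  refine ⟨f, ?_, ?_⟩
  · have := hfS 0; rw [hu0] at this; linarith
  · intro g
    by_contra hcon
    push_neg at hcon
    have hgf : h g + ε * ‖g - f‖ ≤ h f := hcon.le
    have hgS : ∀ n, g ∈ S (u n) := fun n => hTrans _ f g (hfS n) hgf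
    have hgm : ∀ n, m (u n) ≤ h g := fun n => hmle _ _ (hgS n)
    have hgL : L ≤ h g := by
      have h2 : ∀ n, L ≤ h g + (1/2:ℝ)^n := fun n =>
        le_trans (hLle (n+1)) (le_trans (husucc n).2.le (by linarith [hgm n]))
      have hlim : Filter.Tendsto (fun n : ℕ => h g + (1/2:ℝ)^n) Filter.atTop (nhds (h g + 0)) :=
        tendsto_const_nhds.add (tendsto_pow_atTop_nhds_zero_of_lt_one (by norm_num) (by norm_num))
      have := ge_of_tendsto hlim (Filter.Eventually.of_forall h2)
      simpa using this
    have hfL : h f ≤ L := le_ciInf (fun n => by nlinarith [hfS n, norm_nonneg (f - u n), hε.le])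
    have hgf0 : ‖g - f‖ = 0 := le_antisymm (by nlinarith) (norm_nonneg _)
    have : g = f := by rwa [← sub_eq_zero, ← norm_eq_zero]
    rw [this, sub_self, norm_zero] at hcon
    linarith



/-- A convex function `G` with `G 0 = 0` and `G ≥ -ε‖·‖` admits a linear functional
`ν ≤ G` with `ν ≤ ε‖·‖`. -/
lemma exists_subgradient_with_bound {V : Type*} [NormedAddCommGroup V] [NormedSpace ℝ V]
    (G : V → ℝ) (hGconv : ∀ x y (a b : ℝ), 0 ≤ a → 0 ≤ b → a + b = 1 →
      G (a • x + b • y) ≤ a * G x + b * G y)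
    (hG0 : G 0 = 0) (ε : ℝ) (hε : 0 < ε) (hGlb : ∀ g, -(ε * ‖g‖) ≤ G g) :
    ∃ ν : V →ₗ[ℝ] ℝ, (∀ g, ν g ≤ G g) ∧ ∀ g, ν g ≤ ε * ‖g‖ := by
  classical
  -- inf-convolution of G with ε‖·‖
  set p : V → ℝ := fun g => sInf (Set.range fun u => G u + ε * ‖g - u‖) with hp
  have hnormtri : ∀ (g u : V), ‖u‖ ≤ ‖g - u‖ + ‖g‖ := by
    intro g u
    have h3 := norm_add_le (u - g) g
    rw [sub_add_cancel] at h3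
    rw [norm_sub_rev u g] at h3
    linarith
  have hbddp : ∀ g, BddBelow (Set.range fun u => G u + ε * ‖g - u‖) := by
    intro g
    refine ⟨-(ε * ‖g‖), ?_⟩
    rintro r ⟨u, rfl⟩
    show -(ε * ‖g‖) ≤ G u + ε * ‖g - u‖
    have h1 := hGlb u
    have h2 := hnormtri g u
    nlinarith [hε.le]
  have hnep : ∀ g, (Set.range fun u => G u + ε * ‖g - u‖).Nonempty := fun g => ⟨_, ⟨g, rfl⟩⟩
  have hplb : ∀ g, -(ε * ‖g‖) ≤ p g := by
    intro g
    apply le_csInf (hnep g)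
    rintro r ⟨u, rfl⟩
    show -(ε * ‖g‖) ≤ G u + ε * ‖g - u‖
    have h1 := hGlb u
    have h2 := hnormtri g u
    nlinarith [hε.le]
  have hpleG : ∀ g, p g ≤ G g := fun g => csInf_le (hbddp g) ⟨g, by simp⟩
  have hpleN : ∀ g, p g ≤ ε * ‖g‖ := fun g => csInf_le (hbddp g) ⟨0, by simp [hG0]⟩
  have hp0 : p 0 = 0 := le_antisymm (by simpa using hpleN 0) (by simpa using hplb 0)
  -- convexity of p
  have hpconv : ∀ x y (a b : ℝ), 0 < a → 0 < b → a + b = 1 →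
      p (a • x + b • y) ≤ a * p x + b * p y := by
    intro x y a b ha hb hab
    have key : ∀ u v, p (a • x + b • y) ≤ a * (G u + ε * ‖x - u‖) + b * (G v + ε * ‖y - v‖) := by
      intro u v
      have hmem : p (a • x + b • y) ≤ G (a • u + b • v) + ε * ‖(a • x + b • y) - (a • u + b • v)‖ :=
        csInf_le (hbddp _) ⟨a • u + b • v, rfl⟩
      have hGc := hGconv u v a b ha.le hb.le hab
      have hnorm : ‖(a • x + b • y) - (a • u + b • v)‖ ≤ a * ‖x - u‖ + b * ‖y - v‖ := by
        have heq : (a • x + b • y) - (a • u + b • v) = a • (x - u) + b • (y - v) := by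
          rw [smul_sub, smul_sub]; abel
        rw [heq]
        calc ‖a • (x - u) + b • (y - v)‖ ≤ ‖a • (x - u)‖ + ‖b • (y - v)‖ := norm_add_le _ _
          _ = a * ‖x - u‖ + b * ‖y - v‖ := by
              rw [norm_smul, norm_smul, Real.norm_eq_abs, Real.norm_eq_abs,
                abs_of_pos ha, abs_of_pos hb]
      nlinarith [hε.le]
    have step1 : ∀ u, p (a • x + b • y) ≤ a * (G u + ε * ‖x - u‖) + b * p y := by
      intro u
      have h4 : (p (a • x + b • y) - a * (G u + ε * ‖x - u‖)) / b ≤ p y := by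
        apply le_csInf (hnep y)
        rintro r ⟨v, rfl⟩
        show (p (a • x + b • y) - a * (G u + ε * ‖x - u‖)) / b ≤ G v + ε * ‖y - v‖
        rw [div_le_iff₀ hb]
        nlinarith [key u v]
      rw [div_le_iff₀ hb] at h4
      nlinarith
    have h5 : (p (a • x + b • y) - b * p y) / a ≤ p x := by
      apply le_csInf (hnep x)
      rintro r ⟨u, rfl⟩
      show (p (a • x + b • y) - b * p y) / a ≤ G u + ε * ‖x - u‖
      rw [div_le_iff₀ ha]
      nlinarith [step1 u]
    rw [div_le_iff₀ ha] at h5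
    nlinarith
  -- directional derivative of p at 0
  set A : V → Set ℝ := fun g => {r | ∃ t : ℝ, 0 < t ∧ r = p (t • g) / t} with hA
  have hAne : ∀ g, (A g).Nonempty := fun g => ⟨p g, 1, one_pos, by simp⟩
  have hAlb : ∀ g, ∀ r ∈ A g, -(ε * ‖g‖) ≤ r := by
    rintro g r ⟨t, ht, rfl⟩
    rw [le_div_iff₀ ht]
    have h1 := hplb (t • g)
    rw [norm_smul, Real.norm_eq_abs, abs_of_pos ht] at h1
    nlinarith
  have hAbdd : ∀ g, BddBelow (A g) := fun g => ⟨-(ε * ‖g‖), hAlb g⟩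
  set q : V → ℝ := fun g => sInf (A g) with hq
  have hqlep : ∀ g, q g ≤ p g := fun g => csInf_le (hAbdd g) ⟨1, one_pos, by simp⟩
  have hq0 : q 0 = 0 := by
    apply le_antisymm
    · simpa [hp0] using hqlep 0
    · apply le_csInf (hAne 0)
      simpa using hAlb 0
  -- positive homogeneity
  have N_hom : ∀ c : ℝ, 0 < c → ∀ g, q (c • g) = c * q g := by
    intro c hc g
    have hAset : A (c • g) = c • A g := by
      ext r
      constructor
      · rintro ⟨t, ht, rfl⟩
        refine ⟨p ((t * c) • g) / (t * c), ⟨t * c, mul_pos ht hc, rfl⟩, ?_⟩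
        show c • (p ((t * c) • g) / (t * c)) = p (t • c • g) / t
        rw [smul_smul, smul_eq_mul]
        field_simp
      · rintro ⟨r', ⟨t, ht, rfl⟩, rfl⟩
        refine ⟨t / c, div_pos ht hc, ?_⟩
        show c • (p (t • g) / t) = p ((t / c) • (c • g)) / (t / c)
        rw [smul_smul, div_mul_cancel₀ t hc.ne', smul_eq_mul]
        field_simp
    show sInf (A (c • g)) = c * sInf (A g)
    rw [hAset]
    exact Real.sInf_smul_of_nonneg hc.le _
  -- subadditivity
  have N_add : ∀ x y, q (x + y) ≤ q x + q y := by
    intro x y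
    have key : ∀ r ∈ A x, ∀ s ∈ A y, q (x + y) ≤ r + s := by
      rintro r ⟨t, ht, rfl⟩ s ⟨u, hu, rfl⟩
      have htu : 0 < t + u := by linarith
      set lam : ℝ := t * u / (t + u) with hlam
      have hlampos : 0 < lam := by positivity
      have hmem : q (x + y) ≤ p (lam • (x + y)) / lam := csInf_le (hAbdd _) ⟨lam, hlampos, rfl⟩
      have hcomb : lam • (x + y) = (u / (t + u)) • (t • x) + (t / (t + u)) • (u • y) := by
        have h1 : u / (t + u) * t = lam := by rw [hlam]; ring
        have h2 : t / (t + u) * u = lam := by rw [hlam]; ring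
        rw [smul_add, smul_smul, smul_smul, h1, h2]
      have hconv := hpconv (t • x) (u • y) (u / (t + u)) (t / (t + u))
        (by positivity) (by positivity)
        (by rw [← add_div, add_comm u t]; exact div_self htu.ne')
      rw [← hcomb] at hconv
      have hfinal : p (lam • (x + y)) / lam ≤ p (t • x) / t + p (u • y) / u := by
        rw [div_le_iff₀ hlampos]
        refine hconv.trans (le_of_eq ?_)
        rw [hlam]
        field_simp
      exact hmem.trans hfinal
    have step1 : ∀ r ∈ A x, q (x + y) ≤ r + q y := by
      intro r hr
      have h4 : q (x + y) - r ≤ q y := by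
        apply le_csInf (hAne y)
        intro s hs
        linarith [key r hr s hs]
      linarith
    have h5 : q (x + y) - q y ≤ q x := by
      apply le_csInf (hAne x)
      intro r hr
      linarith [step1 r hr]
    linarith
  -- Hahn–Banach
  obtain ⟨ν, -, hν⟩ := exists_extension_of_le_sublinear ((0 : V →ₗ[ℝ] ℝ).toPMap ⊥) q N_hom N_add
    (by
      intro x
      have hx0 : (x : V) = 0 := (Submodule.mem_bot ℝ).mp x.2
      show (0 : V →ₗ[ℝ] ℝ) (x : V) ≤ q (x : V)
      rw [hx0, hq0]
      simp)
  exact ⟨ν, fun g => (hν g).trans ((hqlep g).trans (hpleG g)),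
    fun g => (hν g).trans ((hqlep g).trans (hpleN g))⟩



/-- **Israel's tangent functional approximation theorem.**
Let `V` be a real Banach space and `Λ : V → ℝ` a continuous convex function.
If `μ₀` is a continuous linear functional bounded by `Λ`, then for every `f₀ ∈ V`
and `ε > 0` there exist a continuous linear functional `μ` and `f ∈ V` such that
`μ` is tangent to `Λ` at `f`, `‖μ - μ₀‖ ≤ ε`, and
`‖f - f₀‖ ≤ (1/ε) * (Λ f₀ - μ₀ f₀ + s)` where `s = sup {μ₀ g - Λ g : g ∈ V}`. -/
theorem israel_tangent_functional_approximation
    {V : Type*} [NormedAddCommGroup V] [NormedSpace ℝ V] [CompleteSpace V]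
    (Λ : V → ℝ) (hΛconv : ConvexOn ℝ Set.univ Λ) (hΛcont : Continuous Λ)
    (μ₀ : V →L[ℝ] ℝ) (hbdd : ∀ g : V, μ₀ g ≤ Λ g)
    (f₀ : V) (ε : ℝ) (hε : 0 < ε) :
    ∃ (μ : V →L[ℝ] ℝ) (f : V),
      (∀ g : V, μ g ≤ Λ (f + g) - Λ f) ∧
      ‖μ - μ₀‖ ≤ ε ∧
      ‖f - f₀‖ ≤ (1 / ε) * (Λ f₀ - μ₀ f₀ + sSup {c : ℝ | ∃ g : V, c = μ₀ g - Λ g}) := by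
  classical
  set s : ℝ := sSup {c : ℝ | ∃ g : V, c = μ₀ g - Λ g} with hs
  have hbddA : BddAbove {c : ℝ | ∃ g : V, c = μ₀ g - Λ g} :=
    ⟨0, by rintro c ⟨g, rfl⟩; linarith [hbdd g]⟩
  have hsle : ∀ g : V, μ₀ g - Λ g ≤ s := fun g => le_csSup hbddA ⟨g, rfl⟩
  set h : V → ℝ := fun g => Λ g - μ₀ g with hh
  have hhc : Continuous h := hΛcont.sub μ₀.continuous
  have hhlb : ∀ g, -s ≤ h g := by
    intro g
    have := hsle g
    show -s ≤ Λ g - μ₀ g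
    linarith
  obtain ⟨f, hf1, hf2⟩ := ekeland_principle h hhc (-s) hhlb f₀ ε hε
  set G : V → ℝ := fun g => Λ (f + g) - Λ f - μ₀ g with hG
  have hGconv : ∀ x y (a b : ℝ), 0 ≤ a → 0 ≤ b → a + b = 1 →
      G (a • x + b • y) ≤ a * G x + b * G y := by
    intro x y a b ha hb hab
    have hsplit : f + (a • x + b • y) = a • (f + x) + b • (f + y) := by
      calc f + (a • x + b • y) = (a + b) • f + (a • x + b • y) := by rw [hab, one_smul]
        _ = a • (f + x) + b • (f + y) := by rw [add_smul, smul_add, smul_add]; abel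
    have hΛ := hΛconv.2 (Set.mem_univ (f + x)) (Set.mem_univ (f + y)) ha hb hab
    simp only [smul_eq_mul] at hΛ
    have hμ : μ₀ (a • x + b • y) = a * μ₀ x + b * μ₀ y := by
      rw [map_add, map_smul, map_smul]; rfl
    have hcomb : a * Λ f + b * Λ f = Λ f := by rw [← add_mul, hab, one_mul]
    show Λ (f + (a • x + b • y)) - Λ f - μ₀ (a • x + b • y) ≤
      a * (Λ (f + x) - Λ f - μ₀ x) + b * (Λ (f + y) - Λ f - μ₀ y)
    rw [hsplit, hμ]
    nlinarith [hΛ, hcomb]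
  have hG0 : G 0 = 0 := by
    show Λ (f + 0) - Λ f - μ₀ 0 = 0
    simp
  have hGlb : ∀ g, -(ε * ‖g‖) ≤ G g := by
    intro g
    have h2 := hf2 (f + g)
    have h3 : h f = Λ f - μ₀ f := rfl
    have h4 : h (f + g) = Λ (f + g) - μ₀ f - μ₀ g := by
      show Λ (f + g) - μ₀ (f + g) = Λ (f + g) - μ₀ f - μ₀ g
      rw [map_add]; ring
    rw [add_sub_cancel_left] at h2
    show -(ε * ‖g‖) ≤ Λ (f + g) - Λ f - μ₀ g
    rw [h3, h4] at h2
    linarith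
  obtain ⟨ν, hν1, hν2⟩ := exists_subgradient_with_bound G hGconv hG0 ε hε hGlb
  have hνbound : ∀ g, ‖ν g‖ ≤ ε * ‖g‖ := by
    intro g
    rw [Real.norm_eq_abs, abs_le]
    constructor
    · have := hν2 (-g); rw [map_neg, norm_neg] at this; linarith
    · exact hν2 g
  set νc : V →L[ℝ] ℝ := LinearMap.mkContinuous ν ε hνbound with hνc
  have hνcapp : ∀ g, νc g = ν g := fun g => rfl
  refine ⟨μ₀ + νc, f, ?_, ?_, ?_⟩
  · intro g
    have h1 : (μ₀ + νc) g = μ₀ g + ν g := by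
      rw [ContinuousLinearMap.add_apply, hνcapp]
    have h2 := hν1 g
    have h3 : G g = Λ (f + g) - Λ f - μ₀ g := rfl
    rw [h1]
    rw [h3] at h2
    linarith
  · have heq : μ₀ + νc - μ₀ = νc := by abel
    rw [heq]
    exact LinearMap.mkContinuous_norm_le ν hε.le hνbound
  · have h1 := hhlb f
    have h2 : h f₀ = Λ f₀ - μ₀ f₀ := rfl
    rw [h2] at hf1
    rw [one_div, ← div_eq_inv_mul, le_div_iff₀ hε]
    nlinarith [hf1, h1]
end

section
/- Suppose 𝒢 ⊆ X × (0,∞) satisfies weak controlled specification at scale η > 0 with gap function h_η. Then for any bi-infinite sequence of orbit segments (x_i, t_i)_{i∈ℤ} in 𝒢 there exist a point y ∈ X and a sequence (h_i)_{i∈ℤ} with h_i ∈ [0, max{h_η(t_i), h_η(t_{i+1})}] such that, setting m_0 = 0, m_i = Σ_{j=0}^{i−1}(t_j + h_j) for i > 0, and m_{−i} = −Σ_{j=−i}^{−1}(t_j + h_j) for i > 0, one has d_{t_i}(x_i, f_{m_i}(y)) ≤ η for all i ∈ ℤ. -/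
noncomputable def mAux (t h : ℤ → ℝ) : ℤ → ℝ := fun i =>
  if 0 ≤ i then ∑ j ∈ Finset.range i.toNat, (t j + h j)
  else -∑ j ∈ Finset.range (-i).toNat, (t (-(j : ℤ) - 1) + h (-(j : ℤ) - 1))

lemma mAux_zero (t h : ℤ → ℝ) : mAux t h 0 = 0 := by simp [mAux]

lemma mAux_ofNat (t h : ℤ → ℝ) (k : ℕ) :
    mAux t h k = ∑ j ∈ Finset.range k, (t j + h j) := by
  simp [mAux]

lemma mAux_neg (t h : ℤ → ℝ) (k : ℕ) :
    mAux t h (-(k : ℤ)) = -∑ j ∈ Finset.range k, (t (-(j : ℤ) - 1) + h (-(j : ℤ) - 1)) := by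
  cases k with
  | zero => simp [mAux]
  | succ k =>
    have : ¬ (0 : ℤ) ≤ -((k : ℤ) + 1) := by omega
    simp only [mAux, Nat.cast_succ]
    rw [if_neg this]
    norm_num

lemma mAux_succ (t h : ℤ → ℝ) (i : ℤ) :
    mAux t h (i + 1) = mAux t h i + (t i + h i) := by
  cases i with
  | ofNat k =>
    have h1 : (Int.ofNat k) + 1 = ((k + 1 : ℕ) : ℤ) := by simp
    have h3 : (Int.ofNat k) = ((k : ℕ) : ℤ) := by simp
    rw [h1, h3, mAux_ofNat, mAux_ofNat, Finset.sum_range_succ]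
  | negSucc k =>
    have h1 : (Int.negSucc k) = -((k + 1 : ℕ) : ℤ) := by
      rw [Int.negSucc_eq]; push_cast; ring
    have h2 : -((k + 1 : ℕ) : ℤ) + 1 = -((k : ℕ) : ℤ) := by push_cast; ring
    rw [h1, h2, mAux_neg, mAux_neg, Finset.sum_range_succ]
    have h4 : -((k : ℤ)) - 1 = -((k + 1 : ℕ) : ℤ) := by push_cast; ring
    rw [h4]
    ring

open Topology

/-- **Bi-infinite specification.** If `𝒢 ⊆ X × (0,∞)` satisfies weak controlled
specification at scale `η` with gap function `hgap`, then for every bi-infinite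
sequence of orbit segments `(x i, t i)` from `𝒢` there are a point `y`, transition
times `h i ∈ [0, max (hgap (t i)) (hgap (t (i+1)))]`, and times `m : ℤ → ℝ` with
`m 0 = 0` and `m (i+1) = m i + t i + h i`, such that the orbit of `y` shadows each
segment: `d_{t i}(x i, f_{m i}(y)) ≤ η` for all `i ∈ ℤ`. -/
theorem biinfinite_specification
    {X : Type*} [MetricSpace X] [CompactSpace X] [Nonempty X]
    (f : ℝ → X → X)
    (hflow : Continuous fun p : ℝ × X => f p.1 p.2)
    (hf0 : f 0 = id) (hfadd : ∀ s t : ℝ, f (s + t) = f s ∘ f t)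
    (η : ℝ) (hη : 0 < η)
    (hgap : ℝ → ℝ) (hgap_mono : MonotoneOn hgap (Set.Ioi (0 : ℝ)))
    (hgap_one : ∀ t : ℝ, 0 < t → 1 ≤ hgap t)
    (𝒢 : Set (X × ℝ)) (h𝒢pos : ∀ p ∈ 𝒢, 0 < p.2)
    (hspec : ∀ n : ℕ, 2 ≤ n → ∀ x : ℕ → X, ∀ t : ℕ → ℝ,
      (∀ i < n, (x i, t i) ∈ 𝒢) →
      ∃ τ : ℕ → ℝ,
        (∀ i : ℕ, i + 1 < n → 0 ≤ τ i ∧ τ i ≤ max (hgap (t i)) (hgap (t (i + 1)))) ∧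
        ∃ y : X, ∀ i < n, ∀ s ∈ Set.Icc (0 : ℝ) (t i),
          dist (f s (f (∑ j ∈ Finset.range i, (t j + τ j)) y)) (f s (x i)) < η)
    (x : ℤ → X) (t : ℤ → ℝ) (hxt : ∀ i : ℤ, (x i, t i) ∈ 𝒢) :
    ∃ (y : X) (h : ℤ → ℝ) (m : ℤ → ℝ),
      (∀ i : ℤ, h i ∈ Set.Icc (0 : ℝ) (max (hgap (t i)) (hgap (t (i + 1))))) ∧
      m 0 = 0 ∧ (∀ i : ℤ, m (i + 1) = m i + t i + h i) ∧
      ∀ i : ℤ, ∀ s ∈ Set.Icc (0 : ℝ) (t i),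
        dist (f s (x i)) (f s (f (m i) y)) ≤ η := by
  classical
  have htpos : ∀ i : ℤ, 0 < t i := fun i => h𝒢pos _ (hxt i)
  have hMnn : ∀ i : ℤ, (0:ℝ) ≤ max (hgap (t i)) (hgap (t (i+1))) := fun i =>
    le_trans (le_trans zero_le_one (hgap_one (t i) (htpos i))) (le_max_left _ _)
  -- Step 1: finite approximations
  have key : ∀ N : ℕ, ∃ (hN : ℤ → ℝ) (zN : X),
      (∀ i : ℤ, hN i ∈ Set.Icc (0:ℝ) (max (hgap (t i)) (hgap (t (i+1))))) ∧
      (∀ i : ℤ, -((N:ℤ)+1) ≤ i → i ≤ (N:ℤ)+1 → ∀ s ∈ Set.Icc (0:ℝ) (t i),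
        dist (f s (f (mAux t hN i) zN)) (f s (x i)) < η) := by
    intro N
    obtain ⟨τ, hτ, y', hy'⟩ := hspec (2*N+3) (by omega)
      (fun k => x ((k:ℤ) - ((N:ℤ)+1))) (fun k => t ((k:ℤ) - ((N:ℤ)+1)))
      (fun k _ => hxt _)
    set hN : ℤ → ℝ := fun i =>
      if -((N:ℤ)+1) ≤ i ∧ i ≤ (N:ℤ) then τ (i + (N:ℤ) + 1).toNat else 0 with hNdef
    set S : ℝ := ∑ j ∈ Finset.range (N+1), (t ((j:ℤ) - ((N:ℤ)+1)) + τ j) with Sdef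
    have hNval : ∀ i : ℤ, -((N:ℤ)+1) ≤ i → i ≤ (N:ℤ) →
        hN i = τ (i + (N:ℤ) + 1).toNat := by
      intro i h1 h2
      simp only [hNdef, if_pos (And.intro h1 h2)]
    have hbound : ∀ i : ℤ, -((N:ℤ)+1) ≤ i → i ≤ (N:ℤ) →
        0 ≤ hN i ∧ hN i ≤ max (hgap (t i)) (hgap (t (i+1))) := by
      intro i h1 h2
      have hτ' := hτ (i + (N:ℤ) + 1).toNat (by omega)
      have e1 : (((i + (N:ℤ) + 1).toNat : ℤ)) - ((N:ℤ)+1) = i := by omega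
      have e2 : (((i + (N:ℤ) + 1).toNat + 1 : ℕ) : ℤ) - ((N:ℤ)+1) = i + 1 := by
        push_cast; omega
      rw [e1, e2] at hτ'
      rw [hNval i h1 h2]
      exact hτ'
    -- the key sum identity
    have P : ∀ k : ℕ, k ≤ N + 1 → mAux t hN (k:ℤ) + S =
        ∑ j ∈ Finset.range (k + (N+1)), (t ((j:ℤ) - ((N:ℤ)+1)) + τ j) := by
      intro k
      induction k with
      | zero => intro _; simp [mAux_zero, Sdef]
      | succ k ih =>
        intro hk
        have e1 : ((k : ℤ)) + 1 = ((k+1 : ℕ) : ℤ) := by push_cast; ring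
        have e2 : mAux t hN ((k+1 : ℕ) : ℤ) = mAux t hN (k:ℤ) + (t (k:ℤ) + hN (k:ℤ)) := by
          rw [← e1, mAux_succ]
        have e3 : hN (k:ℤ) = τ (k + (N+1)) := by
          rw [hNval (k:ℤ) (by omega) (by omega),
            show ((k:ℤ) + N + 1).toNat = k + (N+1) from by omega]
        have e4 : t (k:ℤ) = t (((k + (N+1) : ℕ) : ℤ) - ((N:ℤ)+1)) := by
          congr 1; push_cast; ring
        have e5 : (k+1) + (N+1) = (k + (N+1)) + 1 := by omega
        rw [e2, e3, e4, e5, Finset.sum_range_succ, ← ih (by omega)]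
        ring
    have Q : ∀ k : ℕ, k ≤ N + 1 → mAux t hN (-(k:ℤ)) + S =
        ∑ j ∈ Finset.range ((N+1) - k), (t ((j:ℤ) - ((N:ℤ)+1)) + τ j) := by
      intro k
      induction k with
      | zero => intro _; simp [mAux_zero, Sdef]
      | succ k ih =>
        intro hk
        have e2 : mAux t hN (-(k:ℤ)) =
            mAux t hN (-((k:ℤ)+1)) + (t (-((k:ℤ)+1)) + hN (-((k:ℤ)+1))) := by
          have := mAux_succ t hN (-((k:ℤ)+1))
          rw [show -((k:ℤ)+1) + 1 = -(k:ℤ) from by ring] at this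
          exact this
        have e3 : hN (-((k:ℤ)+1)) = τ ((N+1) - (k+1)) := by
          rw [hNval _ (by omega) (by omega),
            show (-((k:ℤ)+1) + N + 1).toNat = (N+1) - (k+1) from by omega]
        have e4 : t (-((k:ℤ)+1)) = t ((((N+1) - (k+1) : ℕ) : ℤ) - ((N:ℤ)+1)) := by
          congr 1; omega
        have e5 : (N+1) - k = ((N+1) - (k+1)) + 1 := by omega
        have ihv := ih (by omega)
        rw [e2, e3, e4, e5, Finset.sum_range_succ] at ihv
        rw [show (-((k+1:ℕ):ℤ)) = -((k:ℤ)+1) from by push_cast; ring]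
        linarith [ihv]
    have AB : ∀ i : ℤ, -((N:ℤ)+1) ≤ i → i ≤ (N:ℤ)+1 →
        mAux t hN i + S =
          ∑ j ∈ Finset.range (i + (N:ℤ) + 1).toNat, (t ((j:ℤ) - ((N:ℤ)+1)) + τ j) := by
      intro i h1 h2
      rcases le_or_gt 0 i with hi | hi
      · have hP := P i.toNat (by omega)
        rw [show ((i.toNat : ℕ) : ℤ) = i from by omega] at hP
        rw [hP, show i.toNat + (N+1) = (i + (N:ℤ) + 1).toNat from by omega]
      · have hQ := Q (-i).toNat (by omega)
        rw [show -(((-i).toNat : ℕ) : ℤ) = i from by omega] at hQ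
        rw [hQ, show (N+1) - (-i).toNat = (i + (N:ℤ) + 1).toNat from by omega]
    refine ⟨hN, f S y', ?_, ?_⟩
    · intro i
      by_cases hc : -((N:ℤ)+1) ≤ i ∧ i ≤ (N:ℤ)
      · exact Set.mem_Icc.2 (hbound i hc.1 hc.2)
      · have h0 : hN i = 0 := by simp only [hNdef, if_neg hc]
        rw [h0]
        exact Set.mem_Icc.2 ⟨le_refl 0, hMnn i⟩
    · intro i h1 h2 s hs
      have hk : (i + (N:ℤ) + 1).toNat < 2*N+3 := by omega
      have hi' : (((i + (N:ℤ) + 1).toNat : ℕ) : ℤ) - ((N:ℤ)+1) = i := by omega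
      have hy := hy' (i + (N:ℤ) + 1).toNat hk s (by rwa [hi'])
      rw [hi', ← AB i h1 h2, hfadd] at hy
      simpa using hy
  choose hfun zfun hmem hshadow using key
  let U : Ultrafilter ℕ := Ultrafilter.of Filter.atTop
  have hUle : (U : Filter ℕ) ≤ Filter.atTop := Ultrafilter.of_le _
  obtain ⟨zlim, -, hz⟩ := isCompact_univ.ultrafilter_le_nhds (U.map zfun)
    (by rw [Ultrafilter.coe_map]; simp)
  rw [Ultrafilter.coe_map] at hz
  have hzt : Filter.Tendsto zfun (U : Filter ℕ) (𝓝 zlim) := hz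
  have hIcc : ∀ i : ℤ, (Ultrafilter.map (fun N => hfun N i) U : Filter ℝ) ≤
      Filter.principal (Set.Icc (0:ℝ) (max (hgap (t i)) (hgap (t (i+1))))) := by
    intro i
    rw [Ultrafilter.coe_map]
    exact Filter.le_principal_iff.2 (Filter.mem_map.2 (Filter.univ_mem' fun N => hmem N i))
  choose hlim hlimmem hlimt using fun i : ℤ =>
    isCompact_Icc.ultrafilter_le_nhds (Ultrafilter.map (fun N => hfun N i) U) (hIcc i)
  have hht : ∀ i : ℤ, Filter.Tendsto (fun N => hfun N i) (U : Filter ℕ) (𝓝 (hlim i)) := by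
    intro i
    have := hlimt i
    rwa [Ultrafilter.coe_map] at this
  have hmt : ∀ i : ℤ, Filter.Tendsto (fun N => mAux t (hfun N) i) (U : Filter ℕ)
      (𝓝 (mAux t hlim i)) := by
    intro i
    induction i using Int.induction_on with
    | zero => simp only [mAux_zero]; exact tendsto_const_nhds
    | succ k ih =>
      simp only [mAux_succ]
      exact ih.add (tendsto_const_nhds.add (hht _))
    | pred k ih =>
      have e : ∀ g : ℤ → ℝ, mAux t g (-(k:ℤ) - 1) =
          mAux t g (-(k:ℤ)) - (t (-(k:ℤ)-1) + g (-(k:ℤ)-1)) := by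
        intro g
        have h1 := mAux_succ t g (-(k:ℤ)-1)
        rw [show -(k:ℤ)-1+1 = -(k:ℤ) from by ring] at h1
        linarith [h1]
      simp only [e]
      exact ih.sub (tendsto_const_nhds.add (hht _))
  have hcs : ∀ s : ℝ, Continuous (f s) := fun s => hflow.comp (Continuous.prodMk_right s)
  refine ⟨zlim, hlim, mAux t hlim, hlimmem, mAux_zero t hlim, ?_, ?_⟩
  · intro i; rw [mAux_succ]; ring
  · intro i s hs
    have inner : Filter.Tendsto (fun N => f (mAux t (hfun N) i) (zfun N)) (U : Filter ℕ)
        (𝓝 (f (mAux t hlim i) zlim)) :=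
      (hflow.tendsto (mAux t hlim i, zlim)).comp ((hmt i).prodMk_nhds hzt)
    have tt : Filter.Tendsto
        (fun N => dist (f s (x i)) (f s (f (mAux t (hfun N) i) (zfun N)))) (U : Filter ℕ)
        (𝓝 (dist (f s (x i)) (f s (f (mAux t hlim i) zlim)))) :=
      tendsto_const_nhds.dist (((hcs s).tendsto _).comp inner)
    have ev : ∀ᶠ N in (U : Filter ℕ),
        dist (f s (x i)) (f s (f (mAux t (hfun N) i) (zfun N))) ≤ η := by
      refine Filter.Eventually.filter_mono hUle ?_
      refine Filter.eventually_atTop.2 ⟨i.natAbs, fun N hN' => ?_⟩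
      have hsh := hshadow N i (by omega) (by omega) s hs
      rw [dist_comm] at hsh
      exact hsh.le
    exact le_of_tendsto tt ev
end

section
/- Let φ, g ∈ C(X,ℝ). Let (ε_n)_{n∈ℕ} be a sequence of positive reals with ε_n → 0, and for each n let μ_n ∈ M_max(φ + ε_n g). If (μ_n) converges to μ in the weak-* topology, then μ ∈ M_max(φ) and ∫g dμ = max{∫g dν : ν ∈ M_max(φ)}. -/
open MeasureTheory

variable {X : Type*} [MetricSpace X] [CompactSpace X] [Nonempty X]
  [MeasurableSpace X] [BorelSpace X]

/-- The set of `F`-invariant Borel probability measures on `X`. -/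
def MF (f : ℝ → X → X) : Set (ProbabilityMeasure X) :=
  {μ | ∀ t : ℝ, (μ : Measure X).map (f t) = (μ : Measure X)}

/-- The maximum ergodic average functional `Λ_F`. -/
noncomputable def LamF (f : ℝ → X → X) (φ : C(X, ℝ)) : ℝ :=
  sSup {a : ℝ | ∃ μ ∈ MF f, a = ∫ x, φ x ∂(μ : Measure X)}

/-- The set of `φ`-maximizing invariant measures. -/
def Mmax (f : ℝ → X → X) (φ : C(X, ℝ)) : Set (ProbabilityMeasure X) :=
  {μ | μ ∈ MF f ∧ ∫ x, φ x ∂(μ : Measure X) = LamF f φ}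

/-- The set of ergodic `F`-invariant Borel probability measures. -/
def MFe (f : ℝ → X → X) : Set (ProbabilityMeasure X) :=
  {μ | μ ∈ MF f ∧ ∀ A : Set X, MeasurableSet A → (∀ t : ℝ, f t ⁻¹' A = A) →
    (μ : Measure X) A = 0 ∨ (μ : Measure X) A = 1}

lemma cm_integrable (ψ : C(X, ℝ)) (ν : ProbabilityMeasure X) :
    Integrable (fun x => ψ x) (ν : Measure X) := by
  exact (BoundedContinuousFunction.mkOfCompact ψ).integrable (ν : Measure X)

lemma cm_integral_le_norm (ψ : C(X, ℝ)) (ν : ProbabilityMeasure X) :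
    ∫ x, ψ x ∂(ν : Measure X) ≤ ‖ψ‖ := by
  calc ∫ x, ψ x ∂(ν : Measure X) ≤ ∫ _x, ‖ψ‖ ∂(ν : Measure X) := by
        refine integral_mono (cm_integrable ψ ν) (integrable_const _) (fun x => ?_)
        exact le_trans (le_abs_self _) (ψ.norm_coe_le_norm x)
    _ = ‖ψ‖ := by simp

lemma bddAbove_lam (f : ℝ → X → X) (ψ : C(X, ℝ)) :
    BddAbove {a : ℝ | ∃ μ ∈ MF f, a = ∫ x, ψ x ∂(μ : Measure X)} := by
  refine ⟨‖ψ‖, fun a ha => ?_⟩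
  obtain ⟨ν, _, rfl⟩ := ha
  exact cm_integral_le_norm ψ ν

lemma le_lamF (f : ℝ → X → X) (ψ : C(X, ℝ)) {ν : ProbabilityMeasure X} (hν : ν ∈ MF f) :
    ∫ x, ψ x ∂(ν : Measure X) ≤ LamF f ψ :=
  le_csSup (bddAbove_lam f ψ) ⟨ν, hν, rfl⟩

/-- If `ε_n ↓ 0`, `μ_n` maximizes `φ + ε_n g`, and `μ_n → μ` weak-*, then `μ`
maximizes `φ` and `∫ g dμ` is the maximum of `∫ g dν` over `ν ∈ M_max(φ)`. -/
theorem perturbed_maximizing_limit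
    (f : ℝ → X → X)
    (hflow : Continuous fun p : ℝ × X => f p.1 p.2)
    (hf0 : f 0 = id) (hfadd : ∀ s t : ℝ, f (s + t) = f s ∘ f t)
    (φ g : C(X, ℝ)) (ε : ℕ → ℝ) (hεpos : ∀ n : ℕ, 0 < ε n)
    (hε0 : Filter.Tendsto ε Filter.atTop (nhds 0))
    (μn : ℕ → ProbabilityMeasure X) (hμn : ∀ n : ℕ, μn n ∈ Mmax f (φ + ε n • g))
    (μ : ProbabilityMeasure X) (hμ : Filter.Tendsto μn Filter.atTop (nhds μ)) :
    μ ∈ Mmax f φ ∧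
    IsGreatest {a : ℝ | ∃ ν ∈ Mmax f φ, a = ∫ x, g x ∂(ν : Measure X)}
      (∫ x, g x ∂(μ : Measure X)) := by
  -- convergence of integrals of continuous functions
  have key : ∀ ψ : C(X, ℝ), Filter.Tendsto (fun n => ∫ x, ψ x ∂(μn n : Measure X))
      Filter.atTop (nhds (∫ x, ψ x ∂(μ : Measure X))) := by
    intro ψ
    simpa using ProbabilityMeasure.tendsto_iff_forall_integral_tendsto.mp hμ
      (BoundedContinuousFunction.mkOfCompact ψ)
  -- the limit measure is invariant
  have hμMF : μ ∈ MF f := by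
    intro t
    have hft : Continuous (f t) := hflow.comp (continuous_const.prodMk continuous_id)
    have h1 := ProbabilityMeasure.tendsto_map_of_tendsto_of_continuous μn μ hμ hft
    have h2 : (fun n => (μn n).map hft.measurable.aemeasurable) = μn := by
      funext n
      apply Subtype.ext
      simpa using (hμn n).1 t
    rw [h2] at h1
    have h3 : μ.map hft.measurable.aemeasurable = μ := tendsto_nhds_unique h1 hμ
    simpa using congrArg Subtype.val h3
  -- splitting the integral of the perturbed potential
  have hsum : ∀ n : ℕ, ∀ ν : ProbabilityMeasure X,
      ∫ x, (φ + ε n • g) x ∂(ν : Measure X)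
        = ∫ x, φ x ∂(ν : Measure X) + ε n * ∫ x, g x ∂(ν : Measure X) := by
    intro n ν
    simp only [ContinuousMap.add_apply, ContinuousMap.smul_apply, smul_eq_mul]
    rw [integral_add (cm_integrable φ ν) ((cm_integrable g ν).const_mul _),
      integral_const_mul]
  -- main inequality from maximization
  have hgeq : ∀ ν ∈ MF f, ∀ n : ℕ,
      ∫ x, φ x ∂(ν : Measure X) + ε n * ∫ x, g x ∂(ν : Measure X)
        ≤ ∫ x, φ x ∂(μn n : Measure X) + ε n * ∫ x, g x ∂(μn n : Measure X) := by
    intro ν hν n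
    have h1 : ∫ x, (φ + ε n • g) x ∂(ν : Measure X) ≤ LamF f (φ + ε n • g) :=
      le_lamF f _ hν
    have h2 := (hμn n).2
    rw [hsum n ν] at h1
    rw [hsum n (μn n)] at h2
    linarith
  -- the limit dominates every invariant measure for φ
  have hφν : ∀ ν ∈ MF f, ∫ x, φ x ∂(ν : Measure X) ≤ ∫ x, φ x ∂(μ : Measure X) := by
    intro ν hν
    have h : ∀ n : ℕ, ∫ x, φ x ∂(ν : Measure X)
        + ε n * (∫ x, g x ∂(ν : Measure X) - ∫ x, g x ∂(μn n : Measure X))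
          ≤ ∫ x, φ x ∂(μn n : Measure X) := by
      intro n
      have := hgeq ν hν n
      ring_nf
      ring_nf at this
      linarith
    have htend : Filter.Tendsto (fun n => ∫ x, φ x ∂(ν : Measure X)
        + ε n * (∫ x, g x ∂(ν : Measure X) - ∫ x, g x ∂(μn n : Measure X)))
        Filter.atTop (nhds (∫ x, φ x ∂(ν : Measure X))) := by
      have hc : Filter.Tendsto
          (fun n => ∫ x, g x ∂(ν : Measure X) - ∫ x, g x ∂(μn n : Measure X))
          Filter.atTop
          (nhds (∫ x, g x ∂(ν : Measure X) - ∫ x, g x ∂(μ : Measure X))) :=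
        Filter.Tendsto.sub tendsto_const_nhds (key g)
      have hm := hε0.mul hc
      rw [zero_mul] at hm
      have htend := (tendsto_const_nhds
        (x := ∫ x, φ x ∂(ν : Measure X)) (f := Filter.atTop (α := ℕ))).add hm
      rwa [add_zero] at htend
    exact le_of_tendsto_of_tendsto' htend (key φ) h
  have hμmax : μ ∈ Mmax f φ := by
    refine ⟨hμMF, le_antisymm (le_lamF f φ hμMF) ?_⟩
    refine csSup_le ⟨∫ x, φ x ∂(μn 0 : Measure X), μn 0, (hμn 0).1, rfl⟩ ?_
    rintro a ⟨ν, hν, rfl⟩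
    exact hφν ν hν
  refine ⟨hμmax, ⟨⟨μ, hμmax, rfl⟩, ?_⟩⟩
  rintro a ⟨ν, ⟨hνMF, hνmax⟩, rfl⟩
  -- for maximizing ν, ∫ g dμn ≥ ∫ g dν for all n
  have hgn : ∀ n : ℕ, ∫ x, g x ∂(ν : Measure X) ≤ ∫ x, g x ∂(μn n : Measure X) := by
    intro n
    have h1 := hgeq ν hνMF n
    have h2 : ∫ x, φ x ∂(μn n : Measure X) ≤ LamF f φ := le_lamF f φ (hμn n).1
    rw [hνmax] at h1
    have h3 : ε n * ∫ x, g x ∂(ν : Measure X) ≤ ε n * ∫ x, g x ∂(μn n : Measure X) := by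
      linarith
    exact le_of_mul_le_mul_left h3 (hεpos n)
  exact ge_of_tendsto' (key g) hgn
end

section
/- If a continuous linear functional μ ∈ C(X,ℝ)* is tangent to Λ_F at φ ∈ C(X,ℝ), then μ is flow-invariant as a functional: μ(ψ − ψ ∘ f_t) = 0 for every ψ ∈ C(X,ℝ) and every t ∈ ℝ. -/
open MeasureTheory

variable {X : Type*} [MetricSpace X] [CompactSpace X] [Nonempty X]
  [MeasurableSpace X] [BorelSpace X]

/-- If `χ` integrates to `0` against every invariant measure, then `Λ_F (φ + χ) = Λ_F φ`. -/
lemma LamF_add_of_integral_zero (f : ℝ → X → X) (φ χ : C(X, ℝ))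
    (hχ : ∀ μ ∈ MF f, ∫ x, χ x ∂(μ : Measure X) = 0) :
    LamF f (φ + χ) = LamF f φ := by
  unfold LamF
  congr 1
  ext a
  constructor
  · rintro ⟨μ, hμ, rfl⟩
    refine ⟨μ, hμ, ?_⟩
    have h1 : Integrable (fun x => φ x) (μ : Measure X) := φ.continuous.integrable_of_hasCompactSupport (HasCompactSupport.of_compactSpace _)
    have h2 : Integrable (fun x => χ x) (μ : Measure X) := χ.continuous.integrable_of_hasCompactSupport (HasCompactSupport.of_compactSpace _)
    simp only [ContinuousMap.add_apply]
    rw [integral_add h1 h2, hχ μ hμ, add_zero]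
  · rintro ⟨μ, hμ, rfl⟩
    refine ⟨μ, hμ, ?_⟩
    have h1 : Integrable (fun x => φ x) (μ : Measure X) := φ.continuous.integrable_of_hasCompactSupport (HasCompactSupport.of_compactSpace _)
    have h2 : Integrable (fun x => χ x) (μ : Measure X) := χ.continuous.integrable_of_hasCompactSupport (HasCompactSupport.of_compactSpace _)
    simp only [ContinuousMap.add_apply]
    rw [integral_add h1 h2, hχ μ hμ, add_zero]

/-- A functional tangent to `Λ_F` at `φ` is flow-invariant:
`L (ψ - ψ ∘ f_t) = 0` for every `ψ ∈ C(X, ℝ)` and `t ∈ ℝ`. -/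
theorem tangent_flow_invariant
    (f : ℝ → X → X)
    (hflow : Continuous fun p : ℝ × X => f p.1 p.2)
    (hf0 : f 0 = id) (hfadd : ∀ s t : ℝ, f (s + t) = f s ∘ f t)
    (L : C(X, ℝ) →L[ℝ] ℝ) (φ : C(X, ℝ))
    (htan : ∀ ψ : C(X, ℝ), L ψ ≤ LamF f (φ + ψ) - LamF f φ) :
    ∀ (ψ : C(X, ℝ)) (t : ℝ),
      L (ψ - ψ.comp ⟨fun x => f t x,
        hflow.comp (Continuous.prodMk continuous_const continuous_id)⟩) = 0 := by
  intro ψ t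
  have hft : Continuous (f t) := hflow.comp (Continuous.prodMk continuous_const continuous_id)
  set χ : C(X, ℝ) := ψ - ψ.comp ⟨fun x => f t x, hft⟩ with hχdef
  have hint : ∀ μ ∈ MF f, ∫ x, χ x ∂(μ : Measure X) = 0 := by
    intro μ hμ
    have hmap : ((μ : Measure X)).map (f t) = (μ : Measure X) := hμ t
    have hcomp : ∫ x, ψ (f t x) ∂(μ : Measure X) = ∫ x, ψ x ∂(μ : Measure X) := by
      rw [← integral_map hft.aemeasurable ψ.continuous.aestronglyMeasurable, hmap]
    have h1 : Integrable (fun x => ψ x) (μ : Measure X) := ψ.continuous.integrable_of_hasCompactSupport (HasCompactSupport.of_compactSpace _)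
    have h2 : Integrable (fun x => ψ (f t x)) (μ : Measure X) :=
      (ψ.continuous.comp hft).integrable_of_hasCompactSupport (HasCompactSupport.of_compactSpace _)
    simp only [hχdef, ContinuousMap.sub_apply, ContinuousMap.comp_apply,
      ContinuousMap.coe_mk]
    rw [integral_sub h1 h2, hcomp, sub_self]
  have hineg : ∀ μ ∈ MF f, ∫ x, (-χ) x ∂(μ : Measure X) = 0 := by
    intro μ hμ
    simp only [ContinuousMap.neg_apply]
    rw [integral_neg, hint μ hμ, neg_zero]
  have h1 : L χ ≤ 0 := by
    have := htan χ
    rw [LamF_add_of_integral_zero f φ χ hint] at this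
    linarith
  have h2 : L (-χ) ≤ 0 := by
    have := htan (-χ)
    rw [LamF_add_of_integral_zero f φ (-χ) hineg] at this
    linarith
  rw [map_neg] at h2
  linarith
end
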